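/- arXiv:1310.7257 — 2 statements merged into one kernel-verified Lean document; each statement's English description precedes it below -/
import Mathlib

section
/- Multinomial formula for Segal polynomials: if T: ℝ^n → ℝ is given by Tx = c₁x₁ + ⋯ + c_n x_n, then for 0 ≤ k < N, p_k^{μ_T}(c₁x₁ + ⋯ + c_n x_n) = Σ_{β ∈ ℕ^n, |β| = k} (k!/β!) c^β p_β^μ(x). -/
open MeasureTheory MvPolynomial

noncomputable section

def mdeg {ι : Type*} [Fintype ι] (β : ι →₀ ℕ) : ℕ := ∑ i, β i

def IsSegalFamily {ι : Type*} [Fintype ι] [DecidableEq ι]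
    (μ : Measure (ι → ℝ)) (N : ℕ∞)
    (p : (ι →₀ ℕ) → MvPolynomial ι ℝ) : Prop :=
  p 0 = 1 ∧
  (∀ β : ι →₀ ℕ, (mdeg β : ℕ∞) < N → ∀ j : ι,
      pderiv j (p β) = (β j : ℝ) • p (β - Finsupp.single j 1)) ∧
  (∀ β : ι →₀ ℕ, 0 < mdeg β → (mdeg β : ℕ∞) < N → ∫ x, eval x (p β) ∂μ = 0)

def HasMoments {ι : Type*} [Fintype ι] (μ : Measure (ι → ℝ)) (N : ℕ∞) : Prop :=
  ∀ k : ℕ, (k : ℕ∞) < N → Integrable (fun x : ι → ℝ => (∑ i, |x i|) ^ k) μ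

def IsAppellFamily (μ : Measure ℝ) (N : ℕ∞) (p : ℕ → Polynomial ℝ) : Prop :=
  p 0 = 1 ∧
  (∀ k : ℕ, ((k + 1 : ℕ) : ℕ∞) < N → Polynomial.derivative (p (k + 1)) = ((k : ℝ) + 1) • p k) ∧
  (∀ k : ℕ, 0 < k → (k : ℕ∞) < N → ∫ x, (p k).eval x ∂μ = 0)

namespace SegalAux
set_option linter.unusedSectionVars false

variable {σ : Type*} [Fintype σ] [DecidableEq σ]

theorem sum_sub_single (β : σ →₀ ℕ) (j : σ) (h : β j ≠ 0) :
    mdeg (β - Finsupp.single j 1) + 1 = mdeg β := by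
  unfold mdeg
  rw [← Finset.sum_erase_add _ _ (Finset.mem_univ j),
    ← Finset.sum_erase_add _ _ (Finset.mem_univ j)]
  have h1 : ∀ i ∈ Finset.univ.erase j, ((β - Finsupp.single j 1 : σ →₀ ℕ) i) = β i := by
    intro i hi
    rw [Finsupp.tsub_apply, Finsupp.single_apply, if_neg (Finset.mem_erase.mp hi).1.symm,
      Nat.sub_zero]
  rw [Finset.sum_congr rfl h1, add_assoc]
  congr 1
  rw [Finsupp.tsub_apply, Finsupp.single_apply, if_pos rfl]
  omega

theorem finsupp_sum_eq (β : σ →₀ ℕ) : (β.sum fun _ e => e) = mdeg β :=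
  Finsupp.sum_fintype _ _ fun _ => rfl

theorem mdeg_eq_zero {β : σ →₀ ℕ} (h : mdeg β = 0) : β = 0 := by
  unfold mdeg at h
  rw [Finset.sum_eq_zero_iff] at h
  exact Finsupp.ext fun i => h i (Finset.mem_univ i)

theorem coeff_pderiv (f : MvPolynomial σ ℝ) (j : σ) (m : σ →₀ ℕ) (hm : m j ≠ 0) :
    coeff (m - Finsupp.single j 1) (pderiv j f) = (m j : ℝ) * coeff m f := by
  conv_lhs => rw [f.as_sum, map_sum]
  rw [Finset.sum_congr rfl (fun s _ => pderiv_monomial), coeff_sum]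
  rw [Finset.sum_eq_single m]
  · rw [coeff_monomial, if_pos rfl, mul_comm]
  · intro s hs hsm
    rw [coeff_monomial]
    split_ifs with h
    · rcases Nat.eq_zero_or_pos (s j) with h0 | h0
      · simp [h0]
      · exfalso
        apply hsm
        have h1 : Finsupp.single j 1 ≤ s := by
          rw [Finsupp.single_le_iff]; omega
        have h2 : Finsupp.single j 1 ≤ m := by
          rw [Finsupp.single_le_iff]; omega
        have := congrArg (· + Finsupp.single j 1) h
        simpa [tsub_add_cancel_of_le h1, tsub_add_cancel_of_le h2] using this
    · rfl
  · intro hmem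
    rw [MvPolynomial.notMem_support_iff] at hmem
    simp [hmem]

theorem eq_C_of_pderiv_eq_zero (f : MvPolynomial σ ℝ) (h : ∀ j, pderiv j f = 0) :
    f = C (coeff 0 f) := by
  ext m
  rcases eq_or_ne m 0 with rfl | hm
  · simp
  · obtain ⟨j, hj⟩ : ∃ j, m j ≠ 0 := by
      by_contra hc
      push_neg at hc
      exact hm (Finsupp.ext hc)
    have := coeff_pderiv f j m hj
    rw [h j] at this
    simp only [coeff_zero] at this
    have hmj : (m j : ℝ) ≠ 0 := Nat.cast_ne_zero.mpr hj
    rw [coeff_C, if_neg (Ne.symm hm)]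
    exact (mul_eq_zero.mp this.symm).resolve_left hmj

theorem totalDegree_le_of_pderiv (f : MvPolynomial σ ℝ) (d : ℕ)
    (h : ∀ j, (pderiv j f).totalDegree ≤ d) : f.totalDegree ≤ d + 1 := by
  apply Finset.sup_le
  intro m hm
  rw [finsupp_sum_eq]
  by_contra hc
  push_neg at hc
  obtain ⟨j, hj⟩ : ∃ j, m j ≠ 0 := by
    by_contra hc2
    push_neg at hc2
    have : mdeg m = 0 := by unfold mdeg; simp [hc2]
    omega
  have hcoeff : coeff (m - Finsupp.single j 1) (pderiv j f) = (m j : ℝ) * coeff m f :=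
    coeff_pderiv f j m hj
  have hzero : coeff (m - Finsupp.single j 1) (pderiv j f) = 0 := by
    apply coeff_eq_zero_of_totalDegree_lt
    have hss := sum_sub_single m j hj
    have h2 : ((m - Finsupp.single j 1 : σ →₀ ℕ).sum fun _ e => e) =
        mdeg (m - Finsupp.single j 1) := finsupp_sum_eq _
    calc (pderiv j f).totalDegree ≤ d := h j
      _ < (m - Finsupp.single j 1 : σ →₀ ℕ).sum fun _ e => e := by
        rw [h2]; omega
  rw [hcoeff] at hzero
  have : coeff m f ≠ 0 := mem_support_iff.mp hm
  have hmj : (m j : ℝ) ≠ 0 := Nat.cast_ne_zero.mpr hj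
  exact this ((mul_eq_zero.mp hzero).resolve_left hmj)

theorem integrable_eval {ι : Type*} [Fintype ι] (μ : Measure (ι → ℝ)) (N : ℕ∞)
    (hmom : HasMoments μ N) (f : MvPolynomial ι ℝ) (h : (f.totalDegree : ℕ∞) < N) :
    Integrable (fun x : ι → ℝ => eval x f) μ := by
  have heval : ∀ x : ι → ℝ, eval x f =
      ∑ d ∈ f.support, coeff d f * ∏ i ∈ d.support, x i ^ d i := fun x => eval_eq x f
  simp only [heval]
  apply integrable_finset_sum
  intro d hd
  apply Integrable.const_mul
  have hdeg : (((∑ i ∈ d.support, d i : ℕ)) : ℕ∞) < N :=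
    lt_of_le_of_lt (Nat.cast_le.mpr (le_totalDegree (s := d) hd)) h
  apply Integrable.mono' (hmom _ hdeg)
  · exact Continuous.aestronglyMeasurable (by continuity)
  · filter_upwards with x
    rw [Real.norm_eq_abs, Finset.abs_prod]
    calc ∏ i ∈ d.support, |x i ^ d i|
        ≤ ∏ i ∈ d.support, (∑ i, |x i|) ^ d i := by
          apply Finset.prod_le_prod (fun i _ => abs_nonneg _)
          intro i _
          rw [abs_pow]
          exact pow_le_pow_left₀ (abs_nonneg _)
            (Finset.single_le_sum (fun i _ => abs_nonneg (x i)) (Finset.mem_univ i)) _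
      _ = (∑ i, |x i|) ^ (∑ i ∈ d.support, d i) := by rw [Finset.prod_pow_eq_pow_sum]

theorem deg_p (N : ℕ∞) (p : (σ →₀ ℕ) → MvPolynomial σ ℝ) (h0 : p 0 = 1)
    (hder : ∀ β : σ →₀ ℕ, (mdeg β : ℕ∞) < N → ∀ j : σ,
      pderiv j (p β) = (β j : ℝ) • p (β - Finsupp.single j 1)) :
    ∀ k : ℕ, ∀ β : σ →₀ ℕ, mdeg β = k → (k : ℕ∞) < N → (p β).totalDegree ≤ k := by
  intro k
  induction k with
  | zero =>
    intro β hβ _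
    rw [mdeg_eq_zero hβ, h0, totalDegree_one]
  | succ m ih =>
    intro β hβ hN
    have hmN : (m : ℕ∞) < N := lt_trans (by exact_mod_cast Nat.lt_succ_self m) hN
    apply totalDegree_le_of_pderiv _ m
    intro j
    rw [hder β (by rw [hβ]; exact hN) j]
    rcases Nat.eq_zero_or_pos (β j) with h0j | h0j
    · simp [h0j]
    · refine le_trans (totalDegree_smul_le _ _) ?_
      exact ih _ (by have := sum_sub_single β j (by omega); omega) hmN

theorem prod_fact_sub (β : σ →₀ ℕ) (j : σ) (h : β j ≠ 0) :
    (∏ i, ((β i).factorial : ℝ)) =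
      (β j : ℝ) * ∏ i, (((β - Finsupp.single j 1 : σ →₀ ℕ) i).factorial : ℝ) := by
  rw [← Finset.mul_prod_erase _ _ (Finset.mem_univ j),
    ← Finset.mul_prod_erase _ (fun i => (((β - Finsupp.single j 1 : σ →₀ ℕ) i).factorial : ℝ))
      (Finset.mem_univ j)]
  have h1 : ∀ i ∈ Finset.univ.erase j, ((β - Finsupp.single j 1 : σ →₀ ℕ) i) = β i := by
    intro i hi
    rw [Finsupp.tsub_apply, Finsupp.single_apply, if_neg (Finset.mem_erase.mp hi).1.symm,
      Nat.sub_zero]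
  have h2 : (∏ i ∈ Finset.univ.erase j,
      (((β - Finsupp.single j 1 : σ →₀ ℕ) i).factorial : ℝ)) =
      ∏ i ∈ Finset.univ.erase j, ((β i).factorial : ℝ) :=
    Finset.prod_congr rfl fun i hi => by rw [h1 i hi]
  rw [h2, ← mul_assoc]
  congr 1
  rw [Finsupp.tsub_apply, Finsupp.single_apply, if_pos rfl]
  rw [← Nat.cast_mul]
  congr 1
  have : β j = (β j - 1) + 1 := by omega
  rw [this, Nat.factorial_succ]
  simp

theorem prod_pow_sub (c : σ → ℝ) (β : σ →₀ ℕ) (j : σ) (h : β j ≠ 0) :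
    (∏ i, c i ^ β i) =
      c j * ∏ i, c i ^ ((β - Finsupp.single j 1 : σ →₀ ℕ) i) := by
  rw [← Finset.mul_prod_erase _ _ (Finset.mem_univ j),
    ← Finset.mul_prod_erase _ (fun i => c i ^ ((β - Finsupp.single j 1 : σ →₀ ℕ) i))
      (Finset.mem_univ j)]
  have h1 : ∀ i ∈ Finset.univ.erase j, ((β - Finsupp.single j 1 : σ →₀ ℕ) i) = β i := by
    intro i hi
    rw [Finsupp.tsub_apply, Finsupp.single_apply, if_neg (Finset.mem_erase.mp hi).1.symm,
      Nat.sub_zero]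
  have h2 : (∏ i ∈ Finset.univ.erase j,
      c i ^ ((β - Finsupp.single j 1 : σ →₀ ℕ) i)) =
      ∏ i ∈ Finset.univ.erase j, c i ^ β i :=
    Finset.prod_congr rfl fun i hi => by rw [h1 i hi]
  rw [h2, ← mul_assoc]
  congr 1
  rw [Finsupp.tsub_apply, Finsupp.single_apply, if_pos rfl]
  have hb : β j = (β j - 1) + 1 := by omega
  conv_lhs => rw [hb]
  rw [pow_succ]
  ring


def segCoef (c : σ → ℝ) (m : ℕ) (β : σ →₀ ℕ) : ℝ :=
  (m.factorial : ℝ) / (∏ i, ((β i).factorial : ℝ)) * ∏ i, c i ^ β i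

def segR (c : σ → ℝ) (p : (σ →₀ ℕ) → MvPolynomial σ ℝ) (m : ℕ) : MvPolynomial σ ℝ :=
  ∑ β ∈ Finset.finsuppAntidiag Finset.univ m, C (segCoef c m β) * p β

theorem mem_antidiag {m : ℕ} {β : σ →₀ ℕ} :
    β ∈ Finset.finsuppAntidiag (Finset.univ : Finset σ) m ↔ mdeg β = m := by
  simp [Finset.mem_finsuppAntidiag, mdeg]

theorem prodfact_ne (β : σ →₀ ℕ) : (∏ i, ((β i).factorial : ℝ)) ≠ 0 :=
  ne_of_gt (Finset.prod_pos fun i _ => Nat.cast_pos.mpr (Nat.factorial_pos _))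

theorem coef_identity (c : σ → ℝ) (m : ℕ) (β : σ →₀ ℕ) (j : σ) (h : β j ≠ 0) :
    segCoef c (m + 1) β * (β j : ℝ) =
      ((m : ℝ) + 1) * c j * segCoef c m (β - Finsupp.single j 1) := by
  unfold segCoef
  rw [prod_fact_sub β j h, prod_pow_sub c β j h, Nat.factorial_succ]
  have hβj : (β j : ℝ) ≠ 0 := Nat.cast_ne_zero.mpr h
  have hB : (∏ i, (((β - Finsupp.single j 1 : σ →₀ ℕ) i).factorial : ℝ)) ≠ 0 :=
    prodfact_ne _
  push_cast
  field_simp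

end SegalAux

theorem segal_multinomial {n : ℕ} (μ : Measure (Fin n → ℝ)) [IsProbabilityMeasure μ]
    (N : ℕ∞) (hmom : HasMoments μ N) (c : Fin n → ℝ)
    (p : (Fin n →₀ ℕ) → MvPolynomial (Fin n) ℝ) (q : ℕ → Polynomial ℝ)
    (hp : IsSegalFamily μ N p)
    (hq : IsAppellFamily (μ.map (fun x : Fin n → ℝ => ∑ i, c i * x i)) N q)
    (k : ℕ) (hk : (k : ℕ∞) < N) (x : Fin n → ℝ) :
    (q k).eval (∑ i, c i * x i) =
      ∑ᶠ β : Fin n →₀ ℕ,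
        if mdeg β = k then
          ((Nat.factorial k : ℕ) : ℝ) / ((∏ i, Nat.factorial (β i) : ℕ) : ℝ) *
            (∏ i, c i ^ β i) * eval x (p β)
        else 0 := by
  classical
  obtain ⟨hp1, hp2, hp3⟩ := hp
  obtain ⟨hq1, hq2, hq3⟩ := hq
  set L : MvPolynomial (Fin n) ℝ := ∑ i, MvPolynomial.C (c i) * MvPolynomial.X i with hLdef
  have hL_eval : ∀ y : Fin n → ℝ, eval y L = ∑ i, c i * y i := by
    intro y; simp [hLdef]
  have hQeval : ∀ (f : Polynomial ℝ) (y : Fin n → ℝ),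
      eval y (Polynomial.aeval L f) = f.eval (∑ i, c i * y i) := by
    intro f y
    have h1 := Polynomial.aeval_algHom_apply (MvPolynomial.aeval y) L f
    have h2 : MvPolynomial.aeval y (Polynomial.aeval L f) = eval y (Polynomial.aeval L f) := rfl
    have h3 : MvPolynomial.aeval y L = eval y L := rfl
    rw [h2, h3, hL_eval] at h1
    rw [← h1, Polynomial.coe_aeval_eq_eval]
  have hLd : ∀ j, pderiv j L = C (c j) := by
    intro j
    rw [hLdef, map_sum]
    rw [Finset.sum_congr rfl fun i _ => pderiv_C_mul]
    simp [pderiv_X, Pi.single_apply, mul_ite, Finset.sum_ite_eq']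
  have hT : Measurable (fun x : Fin n → ℝ => ∑ i, c i * x i) :=
    Finset.measurable_sum _ fun i _ => (measurable_pi_apply i).const_mul _
  have hRe : ∀ m : ℕ, ∀ y : Fin n → ℝ, eval y (SegalAux.segR c p m) =
      ∑ β ∈ Finset.finsuppAntidiag Finset.univ m,
        SegalAux.segCoef c m β * eval y (p β) := by
    intro m y
    unfold SegalAux.segR
    rw [map_sum]
    exact Finset.sum_congr rfl fun β _ => by rw [map_mul, eval_C]
  have main : ∀ m : ℕ, (m : ℕ∞) < N → Polynomial.aeval L (q m) = SegalAux.segR c p m := by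
    intro m
    induction m with
    | zero =>
      intro _
      have hA0 : Finset.finsuppAntidiag (Finset.univ : Finset (Fin n)) 0 = {0} := by
        ext β
        rw [SegalAux.mem_antidiag, Finset.mem_singleton]
        constructor
        · intro h; exact SegalAux.mdeg_eq_zero h
        · rintro rfl; simp [mdeg]
      rw [hq1]
      unfold SegalAux.segR
      rw [hA0, Finset.sum_singleton, hp1]
      unfold SegalAux.segCoef
      simp
    | succ m ih =>
      intro hsN
      have hmN : (m : ℕ∞) < N := lt_trans (by exact_mod_cast Nat.lt_succ_self m) hsN
      have hR := ih hmN
      have hpderivR : ∀ j, pderiv j (SegalAux.segR c p (m + 1)) =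
          C (((m : ℝ) + 1) * c j) * SegalAux.segR c p m := by
        intro j
        unfold SegalAux.segR
        rw [map_sum]
        have hterm : ∀ β ∈ Finset.finsuppAntidiag (Finset.univ : Finset (Fin n)) (m + 1),
            pderiv j (C (SegalAux.segCoef c (m + 1) β) * p β) =
              C (SegalAux.segCoef c (m + 1) β * (β j : ℝ)) * p (β - Finsupp.single j 1) := by
          intro β hβ
          rw [pderiv_C_mul, hp2 β (by rw [SegalAux.mem_antidiag.mp hβ]; exact_mod_cast hsN) j,
            smul_eq_C_mul, ← mul_assoc, ← C_mul]
        rw [Finset.sum_congr rfl hterm]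
        have hfilter : ∀ β ∈ Finset.finsuppAntidiag (Finset.univ : Finset (Fin n)) (m + 1),
            C (SegalAux.segCoef c (m + 1) β * (β j : ℝ)) * p (β - Finsupp.single j 1) ≠ 0 →
              β j ≠ 0 := by
          intro β _ hne h0
          apply hne
          rw [h0]
          simp
        rw [← Finset.sum_filter_of_ne hfilter]
        have hbij : ∑ β ∈ (Finset.finsuppAntidiag (Finset.univ : Finset (Fin n))
              (m + 1)).filter (fun β => β j ≠ 0),
            C (SegalAux.segCoef c (m + 1) β * (β j : ℝ)) * p (β - Finsupp.single j 1) =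
            ∑ γ ∈ Finset.finsuppAntidiag (Finset.univ : Finset (Fin n)) m,
              C (((m : ℝ) + 1) * c j * SegalAux.segCoef c m γ) * p γ := by
          have memf : ∀ {β : Fin n →₀ ℕ},
              β ∈ (Finset.finsuppAntidiag (Finset.univ : Finset (Fin n))
                (m + 1)).filter (fun β => β j ≠ 0) →
              mdeg β = m + 1 ∧ β j ≠ 0 := by
            intro β hβ
            have := Finset.mem_filter.mp hβ
            exact ⟨SegalAux.mem_antidiag.mp this.1, this.2⟩
          refine Finset.sum_bij' (fun β _ => β - Finsupp.single j 1)
            (fun γ _ => γ + Finsupp.single j 1) ?_ ?_ ?_ ?_ ?_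
          · intro β hβ
            obtain ⟨h2, h3⟩ := memf hβ
            rw [SegalAux.mem_antidiag]
            have h1 := SegalAux.sum_sub_single β j h3
            omega
          · intro γ hγ
            rw [Finset.mem_filter]
            have h2 := SegalAux.mem_antidiag.mp hγ
            have h3 : ((γ + Finsupp.single j 1 : Fin n →₀ ℕ)) j ≠ 0 := by
              rw [Finsupp.add_apply, Finsupp.single_apply, if_pos rfl]; omega
            refine ⟨?_, h3⟩
            rw [SegalAux.mem_antidiag]
            have h1 := SegalAux.sum_sub_single (γ + Finsupp.single j 1) j h3
            have h4 : (γ + Finsupp.single j 1 : Fin n →₀ ℕ) - Finsupp.single j 1 = γ :=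
              add_tsub_cancel_right _ _
            rw [h4] at h1
            omega
          · intro β hβ
            exact tsub_add_cancel_of_le (Finsupp.single_le_iff.mpr
              (Nat.one_le_iff_ne_zero.mpr (memf hβ).2))
          · intro γ hγ
            exact add_tsub_cancel_right _ _
          · intro β hβ
            rw [SegalAux.coef_identity c m β j (memf hβ).2]
        rw [hbij, Finset.mul_sum]
        exact Finset.sum_congr rfl fun γ _ => by rw [← mul_assoc, ← C_mul]
      have hpderivQ : ∀ j, pderiv j (Polynomial.aeval L (q (m + 1))) =
          C (((m : ℝ) + 1) * c j) * SegalAux.segR c p m := by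
        intro j
        rw [Derivation.map_aeval, hq2 m (by exact_mod_cast hsN), _root_.map_smul, hR, hLd j,
          smul_eq_mul, smul_eq_C_mul, C_mul]
        ring
      have hDzero : ∀ j, pderiv j (Polynomial.aeval L (q (m + 1)) - SegalAux.segR c p (m + 1))
          = 0 := by
        intro j
        rw [map_sub, hpderivQ j, hpderivR j, sub_self]
      have hCa := SegalAux.eq_C_of_pderiv_eq_zero _ hDzero
      set a : ℝ := coeff 0 (Polynomial.aeval L (q (m + 1)) - SegalAux.segR c p (m + 1)) with ha
      have hQR : Polynomial.aeval L (q (m + 1)) = SegalAux.segR c p (m + 1) + C a := by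
        rw [← hCa]; ring
      have hint : ∀ β ∈ Finset.finsuppAntidiag (Finset.univ : Finset (Fin n)) (m + 1),
          Integrable (fun y => eval y (p β)) μ := by
        intro β hβ
        apply SegalAux.integrable_eval μ N hmom
        refine lt_of_le_of_lt (Nat.cast_le.mpr
          (SegalAux.deg_p N p hp1 hp2 (m + 1) β (SegalAux.mem_antidiag.mp hβ)
            (by exact_mod_cast hsN))) ?_
        exact_mod_cast hsN
      have hRint : Integrable (fun y => eval y (SegalAux.segR c p (m + 1))) μ := by
        simp only [hRe]
        exact integrable_finset_sum _ fun β hβ => (hint β hβ).const_mul _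
      have hRzero : ∫ y, eval y (SegalAux.segR c p (m + 1)) ∂μ = 0 := by
        simp only [hRe]
        rw [integral_finset_sum _ fun β hβ => (hint β hβ).const_mul _]
        refine Finset.sum_eq_zero fun β hβ => ?_
        rw [MeasureTheory.integral_const_mul, hp3 β (by rw [SegalAux.mem_antidiag.mp hβ]; omega)
          (by rw [SegalAux.mem_antidiag.mp hβ]; exact_mod_cast hsN), mul_zero]
      have hQzero : ∫ y, eval y (Polynomial.aeval L (q (m + 1))) ∂μ = 0 := by
        have h1 : ∀ y : Fin n → ℝ, eval y (Polynomial.aeval L (q (m + 1))) =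
            (q (m + 1)).eval (∑ i, c i * y i) := hQeval _
        simp only [h1]
        rw [← integral_map hT.aemeasurable
          ((q (m + 1)).continuous).aestronglyMeasurable]
        exact hq3 (m + 1) (Nat.succ_pos m) (by exact_mod_cast hsN)
      have haz : a = 0 := by
        have h1 := hQzero
        rw [hQR] at h1
        have h2 : ∀ y : Fin n → ℝ, eval y (SegalAux.segR c p (m + 1) + C a) =
            eval y (SegalAux.segR c p (m + 1)) + a := by
          intro y; rw [map_add, eval_C]
        simp only [h2] at h1
        rw [integral_add hRint (integrable_const a), hRzero, integral_const, probReal_univ,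
          one_smul, zero_add] at h1
        exact h1
      rw [hQR, haz, map_zero, add_zero]
  have hM := main k hk
  have hLHS : (q k).eval (∑ i, c i * x i) = eval x (SegalAux.segR c p k) := by
    rw [← hM, hQeval]
  rw [hLHS, hRe]
  have hsupp : (Function.support fun β : Fin n →₀ ℕ =>
      if mdeg β = k then
        ((Nat.factorial k : ℕ) : ℝ) / ((∏ i, Nat.factorial (β i) : ℕ) : ℝ) *
          (∏ i, c i ^ β i) * eval x (p β)
      else 0) ⊆ ↑(Finset.finsuppAntidiag (Finset.univ : Finset (Fin n)) k) := by
    intro β hβ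
    rw [Function.mem_support] at hβ
    rw [Finset.mem_coe, SegalAux.mem_antidiag]
    by_contra hc
    exact hβ (if_neg hc)
  rw [finsum_eq_finset_sum_of_support_subset _ hsupp]
  refine Finset.sum_congr rfl fun β hβ => ?_
  rw [if_pos (SegalAux.mem_antidiag.mp hβ)]
  unfold SegalAux.segCoef
  rw [Nat.cast_prod]

end
end

section
/- Partial-trace identity: let T: ℝ^n → ℝ^m be determined by a function J: {1,…,m} → {1,…,n} via (Tx)_i = x_{J(i)} (i.e., T e_j = Σ_{i: J(i)=j} e_i). Then for every multi-index α ∈ ℕ^m with |α| < N and every x ∈ ℝ^n, p_α^{μ_T}(Tx) = p_{Tᵗα}^μ(x), where (Tᵗα)_j = Σ_{i: J(i)=j} α_i. -/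
open MeasureTheory MvPolynomial

noncomputable section

section Aux

lemma coeff_pderiv' {σ : Type*} [DecidableEq σ] (j : σ) (f : MvPolynomial σ ℝ)
    (m : σ →₀ ℕ) : coeff m (pderiv j f) = (m j + 1 : ℝ) * coeff (m + Finsupp.single j 1) f := by
  induction f using MvPolynomial.induction_on' with
  | monomial s a =>
    rw [pderiv_monomial, coeff_monomial, coeff_monomial]
    by_cases hs : s j = 0
    · have h1 : ¬ s = m + Finsupp.single j 1 := by
        intro h; simp [h] at hs
      rw [if_neg h1, hs]
      simp
    · have h : (s - Finsupp.single j 1 = m) ↔ (s = m + Finsupp.single j 1) := by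
        constructor
        · intro h; rw [← h]; ext i
          by_cases hi : i = j
          · subst hi; simp [Nat.sub_add_cancel (Nat.one_le_iff_ne_zero.2 hs)]
          · simp [Finsupp.single_apply, Ne.symm hi]
        · intro h; rw [h]; ext i
          by_cases hi : i = j
          · subst hi; simp
          · simp [Finsupp.single_apply, Ne.symm hi]
      by_cases h2 : s = m + Finsupp.single j 1
      · rw [if_pos (h.2 h2), if_pos h2, h2]
        rw [Finsupp.add_apply, Finsupp.single_apply, if_pos rfl]
        push_cast
        ring
      · rw [if_neg (fun hh => h2 (h.1 hh)), if_neg h2, mul_zero]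
  | add f g hf hg => simp [hf, hg]; ring

lemma eq_C_of_pderiv_eq_zero' {σ : Type*} [DecidableEq σ] (f : MvPolynomial σ ℝ)
    (h : ∀ j, pderiv j f = 0) : f = C (coeff 0 f) := by
  ext m
  by_cases hm : m = 0
  · simp [hm]
  · rw [coeff_C, if_neg (fun hh => hm hh.symm)]
    obtain ⟨j, hj⟩ : ∃ j, m j ≠ 0 := by
      by_contra hc
      push_neg at hc
      exact hm (Finsupp.ext fun i => hc i)
    have := coeff_pderiv' j f (m - Finsupp.single j 1)
    rw [h j] at this
    have hms : m - Finsupp.single j 1 + Finsupp.single j 1 = m := by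
      ext i
      by_cases hi : i = j
      · subst hi; simp [Nat.sub_add_cancel (Nat.one_le_iff_ne_zero.2 hj)]
      · simp [Finsupp.single_apply, Ne.symm hi]
    rw [hms] at this
    simp only [coeff_zero] at this
    have hne : (((m - Finsupp.single j 1 : σ →₀ ℕ) j : ℕ) : ℝ) + 1 ≠ 0 := by positivity
    exact ((mul_eq_zero.1 this.symm).resolve_left hne)

lemma totalDegree_le_succ_of_pderiv {σ : Type*} [DecidableEq σ] (f : MvPolynomial σ ℝ) (d : ℕ)
    (h : ∀ j, (pderiv j f).totalDegree ≤ d) : f.totalDegree ≤ d + 1 := by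
  rw [totalDegree, Finset.sup_le_iff]
  intro m hm
  by_contra hc
  push_neg at hc
  have hm0 : m ≠ 0 := by
    intro h0; subst h0; simp [Finsupp.sum] at hc
  obtain ⟨j, hj⟩ : ∃ j, m j ≠ 0 := by
    by_contra hcc; push_neg at hcc
    exact hm0 (Finsupp.ext fun i => hcc i)
  have hms : m - Finsupp.single j 1 + Finsupp.single j 1 = m := by
    ext i
    by_cases hi : i = j
    · subst hi; simp [Nat.sub_add_cancel (Nat.one_le_iff_ne_zero.2 hj)]
    · simp [Finsupp.single_apply, Ne.symm hi]
  have hc2 : coeff (m - Finsupp.single j 1) (pderiv j f) ≠ 0 := by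
    rw [coeff_pderiv' j f, hms]
    refine mul_ne_zero (by positivity) ?_
    simpa [MvPolynomial.mem_support_iff] using hm
  have := le_totalDegree (MvPolynomial.mem_support_iff.2 hc2)
  have hsum : ((m - Finsupp.single j 1) : σ →₀ ℕ).sum (fun _ e => e) + 1 = m.sum (fun _ e => e) := by
    conv_rhs => rw [← hms]
    rw [Finsupp.sum_add_index' (fun _ => rfl) (fun _ _ _ => rfl), Finsupp.sum_single_index rfl]
  have h2 := h j
  omega

lemma pderiv_rename_sum {m n : ℕ} (J : Fin m → Fin n) (j : Fin n) (q : MvPolynomial (Fin m) ℝ) :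
    pderiv j (rename J q) =
      ∑ i ∈ Finset.univ.filter (fun i => J i = j), rename J (pderiv i q) := by
  induction q using MvPolynomial.induction_on with
  | C a => simp
  | add f g hf hg => simp [hf, hg, Finset.sum_add_distrib]
  | mul_X f i hf =>
    classical
    simp only [pderiv_mul, map_add, map_mul, rename_X, pderiv_X, hf, Pi.single_apply,
      mul_ite, mul_one, mul_zero, apply_ite (rename J), map_one, map_zero]
    rw [Finset.sum_add_distrib, Finset.sum_mul]
    congr 1
    rw [Finset.sum_ite_eq (Finset.univ.filter (fun x => J x = j)) i (fun _ => rename J f)]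
    by_cases h : J i = j <;> simp [h]

lemma measurable_eval {k : ℕ} (q : MvPolynomial (Fin k) ℝ) :
    Measurable (fun x : Fin k → ℝ => eval x q) := by
  induction q using MvPolynomial.induction_on with
  | C a => simpa using measurable_const
  | add f g hf hg => simpa using (show Measurable fun x : Fin k → ℝ => eval x f + eval x g from hf.add hg)
  | mul_X f i hf => simpa using (show Measurable fun x : Fin k → ℝ => eval x f * x i from hf.mul (measurable_pi_apply i))

lemma mdeg_mapDomain {m n : ℕ} (J : Fin m → Fin n) (α : Fin m →₀ ℕ) :
    mdeg (α.mapDomain J) = mdeg α := by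
  have h1 : ∀ {k : ℕ} (β : Fin k →₀ ℕ), mdeg β = β.sum fun _ e => e := by
    intro k β
    rw [Finsupp.sum_fintype]
    · rfl
    · intro; rfl
  rw [h1, h1, Finsupp.sum_mapDomain_index (fun _ => rfl) (fun _ _ _ => rfl)]

lemma mdeg_eq_zero {k : ℕ} (β : Fin k →₀ ℕ) (h : mdeg β = 0) : β = 0 := by
  ext i
  have := Finset.sum_eq_zero_iff.1 h i (Finset.mem_univ i)
  simpa using this

lemma mapDomain_apply_eq {m n : ℕ} (J : Fin m → Fin n) (α : Fin m →₀ ℕ) (j : Fin n) :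
    α.mapDomain J j = ∑ i ∈ Finset.univ.filter (fun i => J i = j), α i := by
  classical
  rw [Finsupp.mapDomain, Finsupp.sum_apply]
  rw [Finsupp.sum_fintype _ _ (fun _ => by simp)]
  simp only [Finsupp.single_apply]
  rw [Finset.sum_filter]

lemma mdeg_add {k : ℕ} (a b : Fin k →₀ ℕ) : mdeg (a + b) = mdeg a + mdeg b := by
  simp [mdeg, Finset.sum_add_distrib]

lemma mdeg_single {k : ℕ} (j : Fin k) : mdeg (Finsupp.single j 1) = 1 := by
  simp [mdeg, Finsupp.single_apply]

lemma sub_single_add {k : ℕ} (β : Fin k →₀ ℕ) (j : Fin k) (h : β j ≠ 0) :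
    β - Finsupp.single j 1 + Finsupp.single j 1 = β :=
  tsub_add_cancel_of_le (Finsupp.single_le_iff.2 (Nat.one_le_iff_ne_zero.2 h))

lemma mdeg_sub_single {k : ℕ} (β : Fin k →₀ ℕ) (j : Fin k) (h : β j ≠ 0) :
    mdeg (β - Finsupp.single j 1) + 1 = mdeg β := by
  conv_rhs => rw [← sub_single_add β j h]
  rw [mdeg_add, mdeg_single]

lemma integrable_eval {k : ℕ} (μ : Measure (Fin k → ℝ)) [IsProbabilityMeasure μ] {N : ℕ∞}
    (hmom : HasMoments μ N) (f : MvPolynomial (Fin k) ℝ) (hd : (f.totalDegree : ℕ∞) < N) :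
    Integrable (fun x : Fin k → ℝ => eval x f) μ := by
  set d := f.totalDegree with hdd
  have hint : Integrable (fun x : Fin k → ℝ => (∑ i, |x i|) ^ d) μ := hmom d hd
  have hintC : Integrable (fun x : Fin k → ℝ =>
      (∑ m ∈ f.support, |coeff m f|) * (1 + (∑ i, |x i|) ^ d)) μ :=
    ((integrable_const 1).add hint).const_mul _
  refine hintC.mono' (measurable_eval f).aestronglyMeasurable (Filter.Eventually.of_forall ?_)
  intro x
  have hS : 0 ≤ ∑ i, |x i| := Finset.sum_nonneg fun _ _ => abs_nonneg _
  rw [eval_eq]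
  have habs : |∑ m ∈ f.support, coeff m f * ∏ i ∈ m.support, x i ^ m i|
      ≤ ∑ m ∈ f.support, |coeff m f| * (1 + (∑ i, |x i|) ^ d) := by
    refine (Finset.abs_sum_le_sum_abs _ _).trans (Finset.sum_le_sum fun m hm => ?_)
    rw [abs_mul]
    refine mul_le_mul_of_nonneg_left ?_ (abs_nonneg _)
    have h1 : |∏ i ∈ m.support, x i ^ m i| ≤ (∑ i, |x i|) ^ (m.sum fun _ e => e) := by
      rw [Finset.abs_prod]
      calc ∏ i ∈ m.support, |x i ^ m i| ≤ ∏ i ∈ m.support, (∑ i, |x i|) ^ m i := by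
            refine Finset.prod_le_prod (fun _ _ => abs_nonneg _) fun i _ => ?_
            rw [abs_pow]
            exact pow_le_pow_left₀ (abs_nonneg _)
              (Finset.single_le_sum (fun (i : Fin k) _ => abs_nonneg (x i)) (Finset.mem_univ i)) _
        _ = (∑ i, |x i|) ^ (∑ i ∈ m.support, m i) := Finset.prod_pow_eq_pow_sum _ _ _
        _ = _ := rfl
    refine h1.trans ?_
    rcases le_total (∑ i, |x i|) 1 with h | h
    · have h2 : (∑ i, |x i|) ^ (m.sum fun _ e => e) ≤ 1 := pow_le_one₀ hS h
      nlinarith [pow_nonneg hS d]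
    · have h2 : (∑ i, |x i|) ^ (m.sum fun _ e => e) ≤ (∑ i, |x i|) ^ d :=
        pow_le_pow_right₀ h (le_totalDegree hm)
      linarith
  refine habs.trans ?_
  rw [Finset.sum_mul]

lemma segal_totalDegree {k : ℕ} {μ : Measure (Fin k → ℝ)} {N : ℕ∞}
    {p : (Fin k →₀ ℕ) → MvPolynomial (Fin k) ℝ} (hp : IsSegalFamily μ N p) :
    ∀ β : Fin k →₀ ℕ, (mdeg β : ℕ∞) < N → (p β).totalDegree ≤ mdeg β := by
  suffices H : ∀ d : ℕ, ∀ β : Fin k →₀ ℕ, mdeg β = d → (mdeg β : ℕ∞) < N →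
      (p β).totalDegree ≤ mdeg β by
    intro β hβ; exact H (mdeg β) β rfl hβ
  intro d
  induction d using Nat.strong_induction_on with
  | _ d IH =>
    intro β hβd hβN
    rcases Nat.eq_zero_or_pos d with h0 | hpos
    · have hβ0 : β = 0 := mdeg_eq_zero β (by omega)
      subst hβ0
      rw [hp.1]
      simp
    · obtain ⟨e, rfl⟩ : ∃ e, d = e + 1 := ⟨d - 1, by omega⟩
      rw [hβd]
      refine totalDegree_le_succ_of_pderiv _ e fun j => ?_
      rw [hp.2.1 β hβN j]
      by_cases hbj : β j = 0
      · simp [hbj]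
      · refine (totalDegree_smul_le _ _).trans ?_
        have h1 : mdeg (β - Finsupp.single j 1) = e := by
          have := mdeg_sub_single β j hbj; omega
        have h2 : ((mdeg (β - Finsupp.single j 1) : ℕ) : ℕ∞) < N := by
          rw [h1]
          refine lt_of_le_of_lt ?_ hβN
          rw [hβd]
          exact_mod_cast Nat.le_succ e
        exact le_trans (IH e (by omega) _ h1 h2) (le_of_eq h1)

end Aux

theorem segal_partial_trace {n m : ℕ} (μ : Measure (Fin n → ℝ)) [IsProbabilityMeasure μ]
    (N : ℕ∞) (hmom : HasMoments μ N) (J : Fin m → Fin n)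
    (p : (Fin n →₀ ℕ) → MvPolynomial (Fin n) ℝ)
    (pT : (Fin m →₀ ℕ) → MvPolynomial (Fin m) ℝ)
    (hp : IsSegalFamily μ N p)
    (hpT : IsSegalFamily (μ.map (fun x (i : Fin m) => x (J i))) N pT)
    (α : Fin m →₀ ℕ) (hα : (mdeg α : ℕ∞) < N) (x : Fin n → ℝ) :
    eval (fun i => x (J i)) (pT α) = eval x (p (α.mapDomain J)) := by
  classical
  have hTmeas : Measurable (fun (x : Fin n → ℝ) (i : Fin m) => x (J i)) :=
    measurable_pi_lambda _ fun i => measurable_pi_apply (J i)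
  suffices H : ∀ d : ℕ, ∀ α : Fin m →₀ ℕ, mdeg α = d → (mdeg α : ℕ∞) < N →
      rename J (pT α) = p (α.mapDomain J) by
    have h := congrArg (eval x) (H (mdeg α) α rfl hα)
    rwa [eval_rename] at h
  intro d
  induction d using Nat.strong_induction_on with
  | _ d IH =>
    intro α hαd hαN
    rcases Nat.eq_zero_or_pos d with h0 | hpos
    · have hα0 : α = 0 := mdeg_eq_zero α (by omega)
      subst hα0
      rw [hpT.1, Finsupp.mapDomain_zero, hp.1, map_one]
    · set γ := α.mapDomain J with hγdef
      have hγd : mdeg γ = d := by rw [hγdef, mdeg_mapDomain, hαd]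
      have hγN : (mdeg γ : ℕ∞) < N := by rw [hγd, ← hαd]; exact hαN
      have hder : ∀ j : Fin n, pderiv j (rename J (pT α) - p γ) = 0 := by
        intro j
        rw [map_sub, pderiv_rename_sum, hp.2.1 γ hγN j]
        have hterm : ∀ i ∈ Finset.univ.filter (fun i => J i = j),
            rename J (pderiv i (pT α)) = (α i : ℝ) • p (γ - Finsupp.single j 1) := by
          intro i hi
          have hij : J i = j := (Finset.mem_filter.1 hi).2
          rw [hpT.2.1 α hαN i, _root_.map_smul]
          by_cases hzi : α i = 0
          · simp [hzi]
          · congr 1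
            have hsub : (α - Finsupp.single i 1) + Finsupp.single i 1 = α :=
              sub_single_add α i hzi
            have hmdsub : mdeg (α - Finsupp.single i 1) + 1 = d := by
              rw [mdeg_sub_single α i hzi, hαd]
            have hle : mdeg (α - Finsupp.single i 1) ≤ mdeg α := by
              rw [hαd, ← hmdsub]
              exact Nat.le_succ _
            have hN' : ((mdeg (α - Finsupp.single i 1) : ℕ) : ℕ∞) < N :=
              lt_of_le_of_lt (by exact_mod_cast Nat.cast_le.2 hle) hαN
            rw [IH (mdeg (α - Finsupp.single i 1)) (by omega) _ rfl hN']
            congr 1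
            have hmap : γ = (α - Finsupp.single i 1).mapDomain J + Finsupp.single j 1 := by
              rw [hγdef]
              conv_lhs => rw [← hsub]
              rw [Finsupp.mapDomain_add, Finsupp.mapDomain_single, hij]
            rw [hmap]
            ext a
            simp
        rw [Finset.sum_congr rfl hterm, ← Finset.sum_smul]
        have hγj : ((γ j : ℕ) : ℝ) = ∑ i ∈ Finset.univ.filter (fun i => J i = j), (α i : ℝ) := by
          rw [hγdef, mapDomain_apply_eq J α j]
          push_cast
          rfl
        rw [← hγj, sub_self]
      have hconst := eq_C_of_pderiv_eq_zero' _ hder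
      set c := coeff 0 (rename J (pT α) - p γ) with hcdef
      have hint1 : ∫ y, eval y (rename J (pT α)) ∂μ = 0 := by
        have h0 := hpT.2.2 α (by omega) hαN
        rw [MeasureTheory.integral_map hTmeas.aemeasurable
          (measurable_eval (pT α)).aestronglyMeasurable] at h0
        rw [← h0]
        refine integral_congr_ae (Filter.Eventually.of_forall fun y => ?_)
        show eval y (rename J (pT α)) = eval (fun i => y (J i)) (pT α)
        rw [eval_rename]
        rfl
      have hint2 : ∫ y, eval y (p γ) ∂μ = 0 := hp.2.2 γ (by omega) hγN
      have hintg : Integrable (fun y : Fin n → ℝ => eval y (p γ)) μ := by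
        refine integrable_eval μ hmom _ (lt_of_le_of_lt ?_ hγN)
        exact_mod_cast Nat.cast_le.2 (segal_totalDegree hp γ hγN)
      have hevals : ∀ y : Fin n → ℝ, eval y (rename J (pT α)) = eval y (p γ) + c := by
        intro y
        have h := congrArg (eval y) hconst
        rw [map_sub, eval_C] at h
        linarith
      have hc : c = 0 := by
        have h1 : ∫ y, eval y (rename J (pT α)) ∂μ = ∫ y, (eval y (p γ) + c) ∂μ :=
          integral_congr_ae (Filter.Eventually.of_forall fun y => hevals y)
        rw [hint1, integral_add hintg (integrable_const c), hint2, integral_const] at h1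
        simpa using h1.symm
      have hfin : rename J (pT α) - p γ = 0 := by
        rw [hconst, hc, map_zero]
      exact sub_eq_zero.1 hfin

end
end
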